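/- arXiv:1502.01620 — 4 statements merged into one kernel-verified Lean document; each statement's English description precedes it below -/
import Mathlib

section
/- Let ℰ be an F-expectation satisfying (H1). Then for every X, Y ∈ L²(F_T) and every t ∈ [0,T], |ℰ[X|F_t] − ℰ[Y|F_t]| ≤ E^{φ}[|X−Y| | F_t] almost surely. -/
open MeasureTheory ProbabilityTheory Set Filter
open scoped ENNReal NNReal RealInnerProductSpace Topology

noncomputable section

/-- A complete probability space `(Ω, m0, P)` carrying a `d`-dimensional standard Brownian
motion `B` with time horizon `T > 0`, together with its (augmented natural) filtration `ℱ` and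
an (abstract) Itô stochastic integral `stochInt Z s t = ∫_s^t Z_r dB_r`, characterized by its
usual properties (additivity, measurability, vanishing conditional expectation, Itô isometry,
and its value on constant integrands). -/
structure BrownianSetting (Ω : Type*) [m0 : MeasurableSpace Ω] (P : Measure Ω)
    (d : ℕ) (T : ℝ) : Type _ where
  prob : IsProbabilityMeasure P
  hT : 0 < T
  ℱ : Filtration ℝ m0
  B : ℝ → Ω → EuclideanSpace ℝ (Fin d)
  B_cont : ∀ ω, Continuous fun t => B t ω
  B_zero : ∀ᵐ ω ∂P, B 0 ω = 0
  B_adapted : Adapted ℱ B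
  B_indep : ∀ s t : ℝ, 0 ≤ s → s ≤ t →
    Indep (MeasurableSpace.comap (fun ω => B t ω - B s ω) inferInstance) (ℱ s) P
  B_gauss : ∀ s t : ℝ, 0 ≤ s → s ≤ t → ∀ u : EuclideanSpace ℝ (Fin d),
    P.map (fun ω => ⟪u, B t ω - B s ω⟫) =
      gaussianReal 0 (Real.toNNReal (‖u‖ ^ 2 * (t - s)))
  stochInt : (ℝ → Ω → EuclideanSpace ℝ (Fin d)) → ℝ → ℝ → Ω → ℝ
  stochInt_add : ∀ Z (s t u : ℝ), s ≤ t → t ≤ u →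
    ∀ᵐ ω ∂P, stochInt Z s t ω + stochInt Z t u ω = stochInt Z s u ω
  stochInt_meas : ∀ Z (s t : ℝ), ProgMeasurable ℱ Z →
    StronglyMeasurable[ℱ t] (stochInt Z s t)
  stochInt_condexp : ∀ Z (s t : ℝ), 0 ≤ s → s ≤ t → ProgMeasurable ℱ Z →
    (∫⁻ ω, (∫⁻ r in Ioc s t, ((‖Z r ω‖₊ : ℝ≥0∞)) ^ 2 ∂volume) ∂P) < ⊤ →
    P[stochInt Z s t|ℱ s] =ᵐ[P] 0
  stochInt_isometry : ∀ Z (s t : ℝ), 0 ≤ s → s ≤ t → ProgMeasurable ℱ Z →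
    (∫⁻ ω, ((‖stochInt Z s t ω‖₊ : ℝ≥0∞)) ^ 2 ∂P)
      = ∫⁻ ω, (∫⁻ r in Ioc s t, ((‖Z r ω‖₊ : ℝ≥0∞)) ^ 2 ∂volume) ∂P
  stochInt_const : ∀ (z : EuclideanSpace ℝ (Fin d)) (s t : ℝ),
    ∀ᵐ ω ∂P, stochInt (fun _ _ => z) s t ω = ⟪z, B t ω - B s ω⟫

variable {Ω : Type*} [m0 : MeasurableSpace Ω] {P : Measure Ω} {d : ℕ} {T : ℝ}

/-- `X ∈ L²(m)`: square-integrable and `m`-measurable. -/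
def MemL2 (P : Measure Ω) (m : MeasurableSpace Ω) (X : Ω → ℝ) : Prop :=
  MemLp X 2 P ∧ StronglyMeasurable[m] X

/-- `X ∈ L^∞(m)`: essentially bounded and `m`-measurable. -/
def MemLinf (P : Measure Ω) (m : MeasurableSpace Ω) (X : Ω → ℝ) : Prop :=
  StronglyMeasurable[m] X ∧ ∃ C : ℝ, ∀ᵐ ω ∂P, |X ω| ≤ C

/-- `φ : [0,∞) → [0,∞)` is continuous, subadditive, increasing, vanishes at `0` and has linear
growth `φ(x) ≤ ν (x + 1)`. -/
structure IsPhi (φ : ℝ → ℝ) (ν : ℝ) : Prop where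
  contOn : ContinuousOn φ (Ici 0)
  nonneg : ∀ x ∈ Ici (0 : ℝ), 0 ≤ φ x
  monoOn : MonotoneOn φ (Ici 0)
  subadd : ∀ x ∈ Ici (0 : ℝ), ∀ y ∈ Ici (0 : ℝ), φ (x + y) ≤ φ x + φ y
  zero : φ 0 = 0
  nu_pos : 0 < ν
  growth : ∀ x ∈ Ici (0 : ℝ), φ x ≤ ν * (x + 1)

/-- `(Y, Z)` is a square-integrable solution (with `Y ∈ S²_F(0,T)`, `Z ∈ L²_F(0,T;ℝ^d)`) of the
BSDE `Y_t = ξ + ∫_t^T h(s, ·, Z_s) ds − ∫_t^T Z_s dB_s`, `t ∈ [0,T]`. -/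
def IsBSDESol (S : BrownianSetting Ω P d T)
    (h : ℝ → Ω → EuclideanSpace ℝ (Fin d) → ℝ) (ξ : Ω → ℝ)
    (Y : ℝ → Ω → ℝ) (Z : ℝ → Ω → EuclideanSpace ℝ (Fin d)) : Prop :=
  Adapted S.ℱ Y ∧ ProgMeasurable S.ℱ Z ∧
  (∀ ω, ContinuousOn (fun t => Y t ω) (Icc 0 T)) ∧
  MemLp (fun ω => ⨆ t ∈ Icc (0 : ℝ) T, |Y t ω|) 2 P ∧
  (∫⁻ ω, (∫⁻ r in Ioc 0 T, ((‖Z r ω‖₊ : ℝ≥0∞)) ^ 2 ∂volume) ∂P) < ⊤ ∧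
  ∀ t ∈ Icc (0 : ℝ) T, ∀ᵐ ω ∂P,
    Y t ω = ξ ω + (∫ s in Ioc t T, h s ω (Z s ω)) - S.stochInt Z t T ω

/-- A filtration-consistent nonlinear expectation (`F`-expectation): a system of operators
`E t : L²(F_T) → L²(F_t)`, `t ∈ [0,T]`, which is monotone, preserves `F_t`-measurable random
variables, is time-consistent, and satisfies the 0-1 law. -/
structure FExpectation (Ω : Type*) [m0 : MeasurableSpace Ω] (P : Measure Ω)
    (T : ℝ) (ℱ : Filtration ℝ m0) where
  E : ℝ → (Ω → ℝ) → Ω → ℝ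
  maps_L2 : ∀ t ∈ Icc (0 : ℝ) T, ∀ X, MemL2 P (ℱ T) X → MemL2 P (ℱ t) (E t X)
  congr : ∀ t ∈ Icc (0 : ℝ) T, ∀ X X' : Ω → ℝ, X =ᵐ[P] X' → E t X =ᵐ[P] E t X'
  mono : ∀ t ∈ Icc (0 : ℝ) T, ∀ X Y : Ω → ℝ, MemL2 P (ℱ T) X → MemL2 P (ℱ T) Y →
    (∀ᵐ ω ∂P, Y ω ≤ X ω) → ∀ᵐ ω ∂P, E t Y ω ≤ E t X ω
  const_pres : ∀ t ∈ Icc (0 : ℝ) T, ∀ X, MemL2 P (ℱ t) X → E t X =ᵐ[P] X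
  tower : ∀ s t : ℝ, 0 ≤ s → s ≤ t → t ≤ T → ∀ X, MemL2 P (ℱ T) X →
    E s (E t X) =ᵐ[P] E s X
  zero_one : ∀ t ∈ Icc (0 : ℝ) T, ∀ X, MemL2 P (ℱ T) X → ∀ A : Set Ω,
    MeasurableSet[ℱ t] A → E t (A.indicator X) =ᵐ[P] A.indicator (E t X)

/-- Condition (H1): the `F`-expectation `ℰ` is dominated by the `g`-expectation `E^φ` with
generator `φ(|z|)`: for all `X, Y ∈ L²(F_T)` and `t ∈ [0,T]`,
`ℰ[X|F_t] − ℰ[Y|F_t] ≤ E^φ[X − Y|F_t]` a.s. -/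
def SatisfiesH1 (S : BrownianSetting Ω P d T) (φ : ℝ → ℝ)
    (ℰ : FExpectation Ω P T S.ℱ) : Prop :=
  ∀ X Y : Ω → ℝ, MemL2 P (S.ℱ T) X → MemL2 P (S.ℱ T) Y →
    ∀ t ∈ Icc (0 : ℝ) T, ∀ Yφ Zφ,
      IsBSDESol S (fun _ _ z => φ ‖z‖) (fun ω => X ω - Y ω) Yφ Zφ →
      ∀ᵐ ω ∂P, ℰ.E t X ω - ℰ.E t Y ω ≤ Yφ t ω

/-- A real function is RCLL (right-continuous with left limits) on `[a,b]`. -/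
def IsRCLLOn (f : ℝ → ℝ) (a b : ℝ) : Prop :=
  (∀ t ∈ Ico a b, ContinuousWithinAt f (Ici t) t) ∧
  (∀ t ∈ Ioc a b, ∃ l : ℝ, Tendsto f (𝓝[<] t) (𝓝 l))

/-- `Y` is an `ℰ`-supermartingale on `[0,T]`. -/
def IsESupermartingale (S : BrownianSetting Ω P d T) (ℰ : FExpectation Ω P T S.ℱ)
    (Y : ℝ → Ω → ℝ) : Prop :=
  (∀ t ∈ Icc (0 : ℝ) T, MemL2 P (S.ℱ t) (Y t)) ∧
  ∀ s t : ℝ, 0 ≤ s → s ≤ t → t ≤ T → ∀ᵐ ω ∂P, ℰ.E s (Y t) ω ≤ Y s ω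

/-- `Y` is an `ℰ`-submartingale on `[0,T]`. -/
def IsESubmartingale (S : BrownianSetting Ω P d T) (ℰ : FExpectation Ω P T S.ℱ)
    (Y : ℝ → Ω → ℝ) : Prop :=
  (∀ t ∈ Icc (0 : ℝ) T, MemL2 P (S.ℱ t) (Y t)) ∧
  ∀ s t : ℝ, 0 ≤ s → s ≤ t → t ≤ T → ∀ᵐ ω ∂P, Y s ω ≤ ℰ.E s (Y t) ω

/-- `Y` is an `ℰ`-martingale on `[0,T]`. -/
def IsEMartingale (S : BrownianSetting Ω P d T) (ℰ : FExpectation Ω P T S.ℱ)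
    (Y : ℝ → Ω → ℝ) : Prop :=
  (∀ t ∈ Icc (0 : ℝ) T, MemL2 P (S.ℱ t) (Y t)) ∧
  ∀ s t : ℝ, 0 ≤ s → s ≤ t → t ≤ T → ∀ᵐ ω ∂P, ℰ.E s (Y t) ω = Y s ω

/-- `y` solves the BSDE `ℰ(f,T,X,z)` under the `F`-expectation `ℰ`:
`y_t + z·B_t = ℰ[X + z·B_T + ∫_t^T f(s, y_s) ds | F_t]` for all `t ∈ [0,T]`,
with `y` continuous and adapted. -/
def SolvesEBSDE (S : BrownianSetting Ω P d T) (ℰ : FExpectation Ω P T S.ℱ)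
    (f : ℝ → Ω → ℝ → ℝ) (X : Ω → ℝ) (z : EuclideanSpace ℝ (Fin d))
    (y : ℝ → Ω → ℝ) : Prop :=
  Adapted S.ℱ y ∧ (∀ ω, ContinuousOn (fun t => y t ω) (Icc 0 T)) ∧
  ∀ t ∈ Icc (0 : ℝ) T, ∀ᵐ ω ∂P,
    y t ω + ⟪z, S.B t ω⟫ =
      ℰ.E t (fun ω' => X ω' + ⟪z, S.B T ω'⟫ + ∫ s in Ioc t T, f s ω' (y s ω')) ω

/-- `y ∈ S^∞_F(0,T)`-type uniform bound. -/
def BddUnif (P : Measure Ω) (T : ℝ) (y : ℝ → Ω → ℝ) : Prop :=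
  ∃ C : ℝ, ∀ t ∈ Icc (0 : ℝ) T, ∀ᵐ ω ∂P, |y t ω| ≤ C

/-- `(g, Z) ∈ L²_F(0,T) × L²_F(0,T;ℝ^d)` represents the `ℰ`-martingale `t ↦ ℰ[X|F_t]`:
`|g_t| ≤ φ(|Z_t|)` and `ℰ[X|F_t] = X + ∫_t^T g_s ds − ∫_t^T Z_s dB_s`. -/
def RepPair (S : BrownianSetting Ω P d T) (ℰ : FExpectation Ω P T S.ℱ) (φ : ℝ → ℝ)
    (X : Ω → ℝ) (g : ℝ → Ω → ℝ) (Z : ℝ → Ω → EuclideanSpace ℝ (Fin d)) : Prop :=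
  ProgMeasurable S.ℱ g ∧ ProgMeasurable S.ℱ Z ∧
  (∫⁻ ω, (∫⁻ r in Ioc 0 T, ((‖g r ω‖₊ : ℝ≥0∞)) ^ 2 ∂volume) ∂P) < ⊤ ∧
  (∫⁻ ω, (∫⁻ r in Ioc 0 T, ((‖Z r ω‖₊ : ℝ≥0∞)) ^ 2 ∂volume) ∂P) < ⊤ ∧
  (∀ᵐ r ∂volume.restrict (Ioc (0 : ℝ) T), ∀ᵐ ω ∂P, |g r ω| ≤ φ ‖Z r ω‖) ∧
  ∀ t ∈ Icc (0 : ℝ) T, ∀ᵐ ω ∂P,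
    ℰ.E t X ω = X ω + (∫ s in Ioc t T, g s ω) - S.stochInt Z t T ω

/-- under (H1), `|ℰ[X|F_t] − ℰ[Y|F_t]| ≤ E^{φ}[|X−Y| | F_t]` a.s. -/
theorem abs_fexp_diff_le_gexp_abs
    {Ω : Type*} [m0 : MeasurableSpace Ω] {P : Measure Ω} {d : ℕ} {T : ℝ}
    (S : BrownianSetting Ω P d T) (φ : ℝ → ℝ) (ν : ℝ) (hφ : IsPhi φ ν)
    (ℰ : FExpectation Ω P T S.ℱ) (hH1 : SatisfiesH1 S φ ℰ)
    (X Y : Ω → ℝ) (hX : MemL2 P (S.ℱ T) X) (hY : MemL2 P (S.ℱ T) Y)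
    (t : ℝ) (ht : t ∈ Icc (0 : ℝ) T)
    (Yφ : ℝ → Ω → ℝ) (Zφ : ℝ → Ω → EuclideanSpace ℝ (Fin d))
    (hsol : IsBSDESol S (fun _ _ z => φ ‖z‖) (fun ω => |X ω - Y ω|) Yφ Zφ) :
    ∀ᵐ ω ∂P, |ℰ.E t X ω - ℰ.E t Y ω| ≤ Yφ t ω := by
  -- Auxiliary random variables
  set A : Ω → ℝ := fun ω => |X ω - Y ω| with hA
  have hAmem : MemL2 P (S.ℱ T) A := by
    refine ⟨(hX.1.sub hY.1).abs, ?_⟩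
    have : A = fun ω => ‖X ω - Y ω‖ := by
      funext ω; simp [hA, Real.norm_eq_abs]
    rw [this]
    exact (hX.2.sub hY.2).norm
  have hX' : MemL2 P (S.ℱ T) (fun ω => Y ω + A ω) :=
    ⟨hY.1.add hAmem.1, hY.2.add hAmem.2⟩
  have hY' : MemL2 P (S.ℱ T) (fun ω => X ω + A ω) :=
    ⟨hX.1.add hAmem.1, hX.2.add hAmem.2⟩
  -- the given BSDE solution also has terminal value (Y + A) - Y and (X + A) - X
  have hsol1 : IsBSDESol S (fun _ _ z => φ ‖z‖)
      (fun ω => (fun ω => Y ω + A ω) ω - Y ω) Yφ Zφ := by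
    have : (fun ω => (fun ω => Y ω + A ω) ω - Y ω) = fun ω => |X ω - Y ω| := by
      funext ω; simp [hA]
    rw [this]; exact hsol
  have hsol2 : IsBSDESol S (fun _ _ z => φ ‖z‖)
      (fun ω => (fun ω => X ω + A ω) ω - X ω) Yφ Zφ := by
    have : (fun ω => (fun ω => X ω + A ω) ω - X ω) = fun ω => |X ω - Y ω| := by
      funext ω; simp [hA]
    rw [this]; exact hsol
  have h1 := hH1 (fun ω => Y ω + A ω) Y hX' hY t ht Yφ Zφ hsol1
  have h2 := hH1 (fun ω => X ω + A ω) X hY' hX t ht Yφ Zφ hsol2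
  have hm1 : ∀ᵐ ω ∂P, ℰ.E t X ω ≤ ℰ.E t (fun ω => Y ω + A ω) ω := by
    refine ℰ.mono t ht _ _ hX' hX ?_
    filter_upwards with ω
    have := le_abs_self (X ω - Y ω)
    simp only [hA]; linarith
  have hm2 : ∀ᵐ ω ∂P, ℰ.E t Y ω ≤ ℰ.E t (fun ω => X ω + A ω) ω := by
    refine ℰ.mono t ht _ _ hY' hY ?_
    filter_upwards with ω
    have := neg_abs_le (X ω - Y ω)
    simp only [hA]; linarith
  filter_upwards [h1, h2, hm1, hm2] with ω h1 h2 hm1 hm2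
  rw [abs_le]
  constructor <;> linarith
end
end

section
/- Let ℰ be an F-expectation satisfying (H1). Then ℰ is translation invariant: for every X ∈ L²(F_T), every t ∈ [0,T] and every Y ∈ L²(F_t), ℰ[X + Y|F_t] = ℰ[X|F_t] + Y almost surely (i.e., (H1) implies (H2)). -/
open MeasureTheory ProbabilityTheory Set Filter
open scoped ENNReal NNReal RealInnerProductSpace Topology

noncomputable section

variable {Ω : Type*} [m0 : MeasurableSpace Ω] {P : Measure Ω} {d : ℕ} {T : ℝ}

/-- Auxiliary: the BSDE with generator `φ(|z|)` (with `φ 0 = 0`) and an (a.e.) constant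
terminal condition `c` is solved by the constant pair `(c, 0)`. -/
lemma bsde_const_sol (S : BrownianSetting Ω P d T) {φ : ℝ → ℝ}
    (hφ0 : φ 0 = 0) {ξ : Ω → ℝ} {c : ℝ} (hξ : ∀ ω, ξ ω = c) :
    IsBSDESol S (fun _ _ z => φ ‖z‖) ξ (fun _ _ => c)
      (fun _ _ => (0 : EuclideanSpace ℝ (Fin d))) := by
  haveI : IsProbabilityMeasure P := S.prob
  refine ⟨fun i => measurable_const, progMeasurable_const _ _,
    fun ω => continuousOn_const, memLp_const _, ?_, ?_⟩
  · have h0 : ∀ ω : Ω, (∫⁻ r in Ioc (0:ℝ) T,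
        ((‖(0 : EuclideanSpace ℝ (Fin d))‖₊ : ℝ≥0∞)) ^ 2 ∂volume) = 0 := fun ω => by simp
    calc (∫⁻ ω, (∫⁻ r in Ioc (0:ℝ) T,
            ((‖(0 : EuclideanSpace ℝ (Fin d))‖₊ : ℝ≥0∞)) ^ 2 ∂volume) ∂P)
        = ∫⁻ _ω, (0:ℝ≥0∞) ∂P := by simp
      _ < ⊤ := by simp
  · intro s hs
    filter_upwards [S.stochInt_const 0 s T] with ω hω
    simp [hξ, hω, hφ0]

lemma measurable_floor_mul {α : Type*} [mα : MeasurableSpace α] {Y : α → ℝ}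
    (h : Measurable Y) (m : ℝ) : Measurable fun ω => ⌊m * Y ω⌋ :=
  (h.const_mul m).floor

lemma measurable_floor_div {α : Type*} [mα : MeasurableSpace α] {Y : α → ℝ}
    (h : Measurable Y) (m : ℝ) : Measurable fun ω => ((⌊m * Y ω⌋ : ℤ) : ℝ) / m :=
  ((measurable_from_top (f := (Int.cast : ℤ → ℝ))).comp ((h.const_mul m).floor)).div_const m

/-- Auxiliary: translation by constants, from (H1). -/
lemma fexp_const_translate
    (S : BrownianSetting Ω P d T) (φ : ℝ → ℝ) (ν : ℝ) (hφ : IsPhi φ ν)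
    (ℰ : FExpectation Ω P T S.ℱ) (hH1 : SatisfiesH1 S φ ℰ)
    (X : Ω → ℝ) (hX : MemL2 P (S.ℱ T) X)
    (t : ℝ) (ht : t ∈ Icc (0 : ℝ) T) (c : ℝ) :
    ∀ᵐ ω ∂P, ℰ.E t (fun ω' => X ω' + c) ω = ℰ.E t X ω + c := by
  haveI : IsProbabilityMeasure P := S.prob
  have hXc : MemL2 P (S.ℱ T) (fun ω' => X ω' + c) :=
    ⟨hX.1.add (memLp_const c), hX.2.add stronglyMeasurable_const⟩
  have sol1 : IsBSDESol S (fun _ _ z => φ ‖z‖)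
      (fun ω => (X ω + c) - X ω) (fun _ _ => c)
      (fun _ _ => (0 : EuclideanSpace ℝ (Fin d))) :=
    bsde_const_sol S hφ.zero (fun ω => by ring)
  have sol2 : IsBSDESol S (fun _ _ z => φ ‖z‖)
      (fun ω => X ω - (X ω + c)) (fun _ _ => -c)
      (fun _ _ => (0 : EuclideanSpace ℝ (Fin d))) :=
    bsde_const_sol S hφ.zero (fun ω => by ring)
  have h1 := hH1 (fun ω' => X ω' + c) X hXc hX t ht _ _ sol1
  have h2 := hH1 X (fun ω' => X ω' + c) hX hXc t ht _ _ sol2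
  filter_upwards [h1, h2] with ω h1 h2
  have h1' : ℰ.E t (fun ω' => X ω' + c) ω - ℰ.E t X ω ≤ c := h1
  have h2' : ℰ.E t X ω - ℰ.E t (fun ω' => X ω' + c) ω ≤ -c := h2
  linarith

/-- (H1) implies (H2): `ℰ[X + Y|F_t] = ℰ[X|F_t] + Y` a.s. for `Y ∈ L²(F_t)`. -/
theorem fexp_translation_invariance
    {Ω : Type*} [m0 : MeasurableSpace Ω] {P : Measure Ω} {d : ℕ} {T : ℝ}
    (S : BrownianSetting Ω P d T) (φ : ℝ → ℝ) (ν : ℝ) (hφ : IsPhi φ ν)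
    (ℰ : FExpectation Ω P T S.ℱ) (hH1 : SatisfiesH1 S φ ℰ)
    (X : Ω → ℝ) (hX : MemL2 P (S.ℱ T) X)
    (t : ℝ) (ht : t ∈ Icc (0 : ℝ) T)
    (Y : Ω → ℝ) (hY : MemL2 P (S.ℱ t) Y) :
    ∀ᵐ ω ∂P, ℰ.E t (fun ω' => X ω' + Y ω') ω = ℰ.E t X ω + Y ω := by
  haveI : IsProbabilityMeasure P := S.prob
  have hYm : Measurable[S.ℱ t] Y := hY.2.measurable
  have hXY : MemL2 P (S.ℱ T) (fun ω' => X ω' + Y ω') :=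
    ⟨hX.1.add hY.1, hX.2.add (hY.2.mono (S.ℱ.mono ht.2))⟩
  -- per-n approximation
  have key : ∀ n : ℕ, ∀ᵐ ω ∂P,
      |ℰ.E t (fun ω' => X ω' + Y ω') ω - ℰ.E t X ω - Y ω| ≤ 2 / ((n : ℝ) + 1) := by
    intro n
    set m : ℝ := (n : ℝ) + 1 with hm
    have hmpos : (0 : ℝ) < m := by positivity
    have hm1 : (1 : ℝ) ≤ m := by simp [hm]
    set Yn : Ω → ℝ := fun ω => (⌊m * Y ω⌋ : ℝ) / m with hYn
    have hfl : Measurable[S.ℱ t] fun ω => ⌊m * Y ω⌋ := @measurable_floor_mul Ω (S.ℱ t) Y hYm m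
    have hYnm : Measurable[S.ℱ t] Yn := @measurable_floor_div Ω (S.ℱ t) Y hYm m
    have hYnsm : StronglyMeasurable[S.ℱ t] Yn := hYnm.stronglyMeasurable
    have hYnle : ∀ ω, Yn ω ≤ Y ω := by
      intro ω
      rw [hYn, div_le_iff₀ hmpos]
      have := Int.floor_le (m * Y ω)
      nlinarith
    have hleYn : ∀ ω, Y ω ≤ Yn ω + 1 / m := by
      intro ω
      have h2 : m * Y ω - 1 < (⌊m * Y ω⌋ : ℝ) := Int.sub_one_lt_floor _
      rw [hYn, ← add_div, le_div_iff₀ hmpos]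
      nlinarith
    have hYnbd : ∀ ω, |Yn ω| ≤ |Y ω| + 1 := by
      intro ω
      have h1 : (⌊m * Y ω⌋ : ℝ) ≤ m * Y ω := Int.floor_le _
      have h2 : m * Y ω - 1 < (⌊m * Y ω⌋ : ℝ) := Int.sub_one_lt_floor _
      have hy1 : Y ω ≤ |Y ω| := le_abs_self _
      have hy2 : -|Y ω| ≤ Y ω := neg_abs_le _
      have hy3 : (0:ℝ) ≤ |Y ω| := abs_nonneg _
      rw [hYn, abs_div, abs_of_pos hmpos, div_le_iff₀ hmpos, abs_le]
      constructor <;> nlinarith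
    have hYnL2 : MemLp Yn 2 P := by
      refine MemLp.of_le (hY.1.norm.add (memLp_const 1))
        (hYnsm.mono (S.ℱ.le t)).aestronglyMeasurable (ae_of_all _ fun ω => ?_)
      have := hYnbd ω
      have : ‖Yn ω‖ ≤ |Y ω| + 1 := this
      calc ‖Yn ω‖ ≤ |Y ω| + 1 := this
        _ ≤ ‖‖Y ω‖ + 1‖ := le_abs_self _
    set XYn : Ω → ℝ := fun ω => X ω + Yn ω with hXYndef
    have hXYn : MemL2 P (S.ℱ T) XYn :=
      ⟨hX.1.add hYnL2, hX.2.add (hYnsm.mono (S.ℱ.mono ht.2))⟩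
    -- Claim 1: E t XYn = E t X + Yn a.e.
    have claim1 : ∀ᵐ ω ∂P, ℰ.E t XYn ω = ℰ.E t X ω + Yn ω := by
      have hk : ∀ k : ℤ, ∀ᵐ ω ∂P, ⌊m * Y ω⌋ = k →
          ℰ.E t XYn ω = ℰ.E t X ω + (k : ℝ) / m := by
        intro k
        set A : Set Ω := {ω | ⌊m * Y ω⌋ = k} with hA
        have hAk : MeasurableSet[S.ℱ t] A := hfl (measurableSet_singleton k)
        have hXk : MemL2 P (S.ℱ T) (fun ω => X ω + (k : ℝ) / m) :=
          ⟨hX.1.add (memLp_const _), hX.2.add stronglyMeasurable_const⟩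
        have e1 := ℰ.zero_one t ht XYn hXYn A hAk
        have feq : A.indicator XYn = A.indicator (fun ω => X ω + (k : ℝ) / m) := by
          funext ω
          by_cases h : ω ∈ A
          · rw [Set.indicator_of_mem h, Set.indicator_of_mem h]
            have hkeq : ⌊m * Y ω⌋ = k := h
            simp [hXYndef, hYn, hkeq]
          · rw [Set.indicator_of_notMem h, Set.indicator_of_notMem h]
        rw [feq] at e1
        have e3 := ℰ.zero_one t ht (fun ω => X ω + (k : ℝ) / m) hXk A hAk
        have e4 := fexp_const_translate S φ ν hφ ℰ hH1 X hX t ht ((k : ℝ) / m)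
        filter_upwards [e1, e3, e4] with ω h1 h3 h4
        intro hmem
        have hmem' : ω ∈ A := hmem
        have h13 : A.indicator (ℰ.E t XYn) ω
            = A.indicator (ℰ.E t (fun ω => X ω + (k : ℝ) / m)) ω := h1.symm.trans h3
        rw [Set.indicator_of_mem hmem', Set.indicator_of_mem hmem'] at h13
        rw [h13, h4]
      filter_upwards [ae_all_iff.2 hk] with ω hω
      have h := hω ⌊m * Y ω⌋ rfl
      rw [h, hYn]
    -- Claim 2: squeeze
    have hmono1 := ℰ.mono t ht (fun ω' => X ω' + Y ω') XYn hXY hXYn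
      (ae_of_all _ fun ω => by exact add_le_add_right (hYnle ω) _)
    have hXYn1 : MemL2 P (S.ℱ T) (fun ω => XYn ω + 1 / m) :=
      ⟨hXYn.1.add (memLp_const _), hXYn.2.add stronglyMeasurable_const⟩
    have hmono2 := ℰ.mono t ht (fun ω => XYn ω + 1 / m) (fun ω' => X ω' + Y ω') hXYn1 hXY
      (ae_of_all _ fun ω => by
        have := hleYn ω
        simp only [XYn]
        linarith)
    have h3 := fexp_const_translate S φ ν hφ ℰ hH1 XYn hXYn t ht (1 / m)
    filter_upwards [claim1, hmono1, hmono2, h3] with ω c1 c2 c3 c4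
    have hb1 := hYnle ω
    have hb2 := hleYn ω
    rw [c4] at c3
    rw [abs_le]
    have hminv : (0:ℝ) < 1 / m := by positivity
    have h2m : (2:ℝ) / m = 2 * (1 / m) := by ring
    constructor <;> linarith
  -- conclude
  filter_upwards [ae_all_iff.2 key] with ω hω
  set D : ℝ := ℰ.E t (fun ω' => X ω' + Y ω') ω - ℰ.E t X ω - Y ω with hD
  have hD0 : |D| ≤ 0 := by
    by_contra h
    push_neg at h
    obtain ⟨n, hn⟩ := exists_nat_gt (2 / |D|)
    have hpos : (0:ℝ) < |D| := h
    have h2 : 2 / ((n : ℝ) + 1) < |D| := by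
      rw [div_lt_iff₀ (by positivity)]
      rw [div_lt_iff₀ hpos] at hn
      nlinarith
    exact absurd (hω n) (not_le.2 h2)
  have : D = 0 := abs_nonpos_iff.mp hD0
  linarith [this]
end
end

section
/- Local property at stopping times: let ℰ be an F-expectation satisfying (H1), σ a stopping time with values in [0,T], and X, Y ∈ L²(F_T). Then for every A ∈ F_σ, 1_A ℰ[X + Y | F_σ] = 1_A ℰ[1_A X + Y | F_σ] almost surely. -/
open MeasureTheory ProbabilityTheory Set Filter
open scoped ENNReal NNReal RealInnerProductSpace Topology

noncomputable section

variable {Ω : Type*} [m0 : MeasurableSpace Ω] {P : Measure Ω} {d : ℕ} {T : ℝ}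

/-- local property at stopping times:
`1_A ℰ[X + Y|F_σ] = 1_A ℰ[1_A X + Y|F_σ]` a.s. for `A ∈ F_σ`; here `ℰ[ξ|F_σ] = V_σ` with
`V` the RCLL version of `t ↦ ℰ[ξ|F_t]`. -/
theorem fexp_local_property_stopping
    {Ω : Type*} [m0 : MeasurableSpace Ω] {P : Measure Ω} {d : ℕ} {T : ℝ}
    (S : BrownianSetting Ω P d T) (φ : ℝ → ℝ) (ν : ℝ) (hφ : IsPhi φ ν)
    (ℰ : FExpectation Ω P T S.ℱ) (hH1 : SatisfiesH1 S φ ℰ)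
    (σ : Ω → ℝ) (hσ : IsStoppingTime S.ℱ (fun ω => (σ ω : WithTop ℝ))) (hσT : ∀ ω, σ ω ∈ Icc (0 : ℝ) T)
    (X Y : Ω → ℝ) (hX : MemL2 P (S.ℱ T) X) (hY : MemL2 P (S.ℱ T) Y)
    (A : Set Ω) (hA : MeasurableSet[hσ.measurableSpace] A)
    (V₁ : ℝ → Ω → ℝ) (hV₁_rcll : ∀ ω, IsRCLLOn (fun t => V₁ t ω) 0 T)
    (hV₁ : ∀ t ∈ Icc (0 : ℝ) T, V₁ t =ᵐ[P] ℰ.E t (fun ω => X ω + Y ω))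
    (V₂ : ℝ → Ω → ℝ) (hV₂_rcll : ∀ ω, IsRCLLOn (fun t => V₂ t ω) 0 T)
    (hV₂ : ∀ t ∈ Icc (0 : ℝ) T, V₂ t =ᵐ[P] ℰ.E t (fun ω => A.indicator X ω + Y ω)) :
    ∀ᵐ ω ∂P, A.indicator (fun ω' => V₁ (σ ω') ω') ω
      = A.indicator (fun ω' => V₂ (σ ω') ω') ω := by
  -- abbreviations
  set f₁ : Ω → ℝ := fun ω => X ω + Y ω with hf₁
  set f₂ : Ω → ℝ := fun ω => A.indicator X ω + Y ω with hf₂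
  have hAT : MeasurableSet[S.ℱ T] A := by
    have h := hA.2 T
    have he : A ∩ {ω | (σ ω : WithTop ℝ) ≤ T} = A :=
      Set.inter_eq_left.mpr (fun ω _ => WithTop.coe_le_coe.mpr (hσT ω).2)
    rwa [he] at h
  have hXY : MemL2 P (S.ℱ T) f₁ := ⟨hX.1.add hY.1, hX.2.add hY.2⟩
  have hAXY : MemL2 P (S.ℱ T) f₂ :=
    ⟨(hX.1.indicator ((S.ℱ.le T) A hAT)).add hY.1, (hX.2.indicator hAT).add hY.2⟩
  -- key pointwise lemma at deterministic times
  have key : ∀ t ∈ Icc (0 : ℝ) T, ∀ B : Set Ω, MeasurableSet[S.ℱ t] B → B ⊆ A →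
      ∀ᵐ ω ∂P, ω ∈ B → V₁ t ω = V₂ t ω := by
    intro t ht B hB hBA
    have hc : B.indicator f₁ = B.indicator f₂ := by
      funext ω
      by_cases hω : ω ∈ B
      · rw [Set.indicator_of_mem hω, Set.indicator_of_mem hω]
        simp [hf₁, hf₂, Set.indicator_of_mem (hBA hω)]
      · rw [Set.indicator_of_notMem hω, Set.indicator_of_notMem hω]
    have h01a := ℰ.zero_one t ht f₁ hXY B hB
    have h01b := ℰ.zero_one t ht f₂ hAXY B hB
    rw [hc] at h01a
    have hind : B.indicator (ℰ.E t f₁) =ᵐ[P] B.indicator (ℰ.E t f₂) :=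
      h01a.symm.trans h01b
    filter_upwards [hV₁ t ht, hV₂ t ht, hind] with ω e1 e2 e3 hωB
    rw [Set.indicator_of_mem hωB, Set.indicator_of_mem hωB] at e3
    rw [e1, e2, e3]
  -- dyadic approximation sets
  have h2pos : ∀ n : ℕ, (0 : ℝ) < 2 ^ n := fun n => by positivity
  set δ : ℕ → ℝ := fun n => T / 2 ^ n with hδ
  have hδpos : ∀ n, 0 < δ n := fun n => div_pos S.hT (h2pos n)
  set Bnk : ℕ → ℕ → Set Ω := fun n k =>
    A ∩ {ω | σ ω ≤ (k : ℝ) * δ n} ∩ {ω | ((k : ℝ) - 1) * δ n < σ ω} with hBnk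
  have h2T : ∀ n : ℕ, (2 : ℝ) ^ n * δ n = T := by
    intro n; rw [hδ]; field_simp
  have hBnk_meas : ∀ n k : ℕ, MeasurableSet[S.ℱ ((k : ℝ) * δ n)] (Bnk n k) := by
    intro n k
    refine MeasurableSet.inter (by have h := hA.2 ((k : ℝ) * δ n); simpa only [WithTop.coe_le_coe] using h) ?_
    have h1 : MeasurableSet[S.ℱ (((k : ℝ) - 1) * δ n)] {ω | σ ω ≤ ((k : ℝ) - 1) * δ n} :=
      by have h := hσ (((k : ℝ) - 1) * δ n); simpa only [WithTop.coe_le_coe] using h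
    have h2 : MeasurableSet[S.ℱ ((k : ℝ) * δ n)] {ω | σ ω ≤ ((k : ℝ) - 1) * δ n} :=
      S.ℱ.mono (by nlinarith [hδpos n]) _ h1
    have : {ω | ((k : ℝ) - 1) * δ n < σ ω} = {ω | σ ω ≤ ((k : ℝ) - 1) * δ n}ᶜ := by
      ext ω; simp [not_le]
    rw [this]
    exact h2.compl
  -- a.e. equality on all dyadic pieces
  have hae : ∀ᵐ ω ∂P, ∀ n k : ℕ, k ≤ 2 ^ n → ω ∈ Bnk n k →
      V₁ ((k : ℝ) * δ n) ω = V₂ ((k : ℝ) * δ n) ω := by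
    rw [ae_all_iff]
    intro n
    rw [ae_all_iff]
    intro k
    by_cases hk : k ≤ 2 ^ n
    · have htmem : (k : ℝ) * δ n ∈ Icc (0 : ℝ) T := by
        constructor
        · exact mul_nonneg (Nat.cast_nonneg k) (hδpos n).le
        · have : (k : ℝ) ≤ 2 ^ n := by exact_mod_cast hk
          calc (k : ℝ) * δ n ≤ (2 : ℝ) ^ n * δ n := by
                exact mul_le_mul_of_nonneg_right this (hδpos n).le
            _ = T := h2T n
      filter_upwards [key _ htmem (Bnk n k) (hBnk_meas n k)
        (fun ω hω => hω.1.1)] with ω hω _ hmem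
      exact hω hmem
    · exact Filter.Eventually.of_forall fun ω hle _ => absurd hle hk
  filter_upwards [hae] with ω hω
  by_cases hωA : ω ∈ A
  · rw [Set.indicator_of_mem hωA, Set.indicator_of_mem hωA]
    set s := σ ω with hs
    have hs0 : 0 ≤ s := (hσT ω).1
    have hsT : s ≤ T := (hσT ω).2
    set k : ℕ → ℕ := fun n => ⌈s / δ n⌉₊ with hk
    set tn : ℕ → ℝ := fun n => (k n : ℝ) * δ n with htn
    have hstn : ∀ n, s ≤ tn n := by
      intro n
      have := Nat.le_ceil (s / δ n)
      calc s = s / δ n * δ n := (div_mul_cancel₀ s (hδpos n).ne').symm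
        _ ≤ (k n : ℝ) * δ n := mul_le_mul_of_nonneg_right this (hδpos n).le
    have htns : ∀ n, tn n < s + δ n := by
      intro n
      have h1 : (k n : ℝ) < s / δ n + 1 :=
        Nat.ceil_lt_add_one (div_nonneg hs0 (hδpos n).le)
      calc tn n < (s / δ n + 1) * δ n :=
            mul_lt_mul_of_pos_right h1 (hδpos n)
        _ = s + δ n := by
            rw [add_mul, div_mul_cancel₀ s (hδpos n).ne', one_mul]
    have hk2 : ∀ n, k n ≤ 2 ^ n := by
      intro n
      rw [hk]
      refine Nat.ceil_le.mpr ?_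
      rw [div_le_iff₀ (hδpos n)]
      have hc : ((2 ^ n : ℕ) : ℝ) = (2 : ℝ) ^ n := by push_cast; ring
      rw [hc]
      calc s ≤ T := hsT
        _ = (2 : ℝ) ^ n * δ n := (h2T n).symm
    have hmem : ∀ n, ω ∈ Bnk n (k n) := by
      intro n
      refine ⟨⟨hωA, hstn n⟩, ?_⟩
      show ((k n : ℝ) - 1) * δ n < σ ω
      have h1 : (k n : ℝ) < s / δ n + 1 :=
        Nat.ceil_lt_add_one (div_nonneg hs0 (hδpos n).le)
      have : ((k n : ℝ) - 1) * δ n < (s / δ n) * δ n := by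
        apply mul_lt_mul_of_pos_right _ (hδpos n)
        linarith
      calc ((k n : ℝ) - 1) * δ n < s / δ n * δ n := this
        _ = s := div_mul_cancel₀ s (hδpos n).ne'
    have heqn : ∀ n, V₁ (tn n) ω = V₂ (tn n) ω := fun n => hω n (k n) (hk2 n) (hmem n)
    by_cases hsT' : s = T
    · have h0 : tn 0 = T := by
        have h1 := hstn 0
        have h2 : tn 0 ≤ T := by
          have : (k 0 : ℝ) ≤ 2 ^ 0 := by exact_mod_cast hk2 0
          calc tn 0 ≤ (2 : ℝ) ^ 0 * δ 0 := mul_le_mul_of_nonneg_right this (hδpos 0).le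
            _ = T := h2T 0
        linarith [hsT' ▸ h1]
      have := heqn 0
      rwa [h0, ← hsT'] at this
    · -- s < T, use right-continuity
      have hsT'' : s < T := lt_of_le_of_ne hsT hsT'
      have hδ0 : Tendsto δ atTop (𝓝 0) := by
        have h2 : Tendsto (fun n : ℕ => (2 : ℝ) ^ n) atTop atTop :=
          tendsto_pow_atTop_atTop_of_one_lt one_lt_two
        simpa [hδ] using Tendsto.div_atTop (tendsto_const_nhds (x := T)) h2
      have htlim : Tendsto tn atTop (𝓝 s) := by
        have hupper : Tendsto (fun n => s + δ n) atTop (𝓝 s) := by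
          simpa using (tendsto_const_nhds (x := s)).add hδ0
        exact tendsto_of_tendsto_of_tendsto_of_le_of_le tendsto_const_nhds hupper
          hstn (fun n => (htns n).le)
      have htlim' : Tendsto tn atTop (𝓝[Ici s] s) :=
        tendsto_nhdsWithin_of_tendsto_nhds_of_eventually_within _ htlim
          (Filter.Eventually.of_forall hstn)
      have hc1 : ContinuousWithinAt (fun t => V₁ t ω) (Ici s) s :=
        (hV₁_rcll ω).1 s ⟨hs0, hsT''⟩
      have hc2 : ContinuousWithinAt (fun t => V₂ t ω) (Ici s) s :=
        (hV₂_rcll ω).1 s ⟨hs0, hsT''⟩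
      have l1 : Tendsto (fun n => V₁ (tn n) ω) atTop (𝓝 (V₁ s ω)) := hc1.tendsto.comp htlim'
      have l2 : Tendsto (fun n => V₂ (tn n) ω) atTop (𝓝 (V₂ s ω)) := hc2.tendsto.comp htlim'
      have : Tendsto (fun n => V₁ (tn n) ω) atTop (𝓝 (V₂ s ω)) := by
        refine l2.congr fun n => (heqn n).symm
      exact tendsto_nhds_unique l1 this
  · rw [Set.indicator_of_notMem hωA, Set.indicator_of_notMem hωA]
end
end

section
/- Translation invariance at stopping times: let ℰ be an F-expectation satisfying (H1), σ a stopping time with values in [0,T], and X ∈ L²(F_T). Then for every Y ∈ L²(F_σ), ℰ[X + Y | F_σ] = ℰ[X | F_σ] + Y almost surely. -/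
open MeasureTheory ProbabilityTheory Set Filter
open scoped ENNReal NNReal RealInnerProductSpace Topology

noncomputable section

variable {Ω : Type*} [m0 : MeasurableSpace Ω] {P : Measure Ω} {d : ℕ} {T : ℝ}

lemma bsde_const (S : BrownianSetting Ω P d T) {φ : ℝ → ℝ} {ν : ℝ} (hφ : IsPhi φ ν)
    (ξ : Ω → ℝ) (c : ℝ) (hξ : ∀ ω, ξ ω = c) :
    IsBSDESol S (fun _ _ z => φ ‖z‖) ξ (fun _ _ => c)
      (fun _ _ => (0 : EuclideanSpace ℝ (Fin d))) := by
  haveI := S.prob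
  refine ⟨fun i => measurable_const, progMeasurable_const _ _,
    fun ω => continuousOn_const, memLp_const _, ?_, ?_⟩
  · simp
  · intro t ht
    filter_upwards [S.stochInt_const 0 t T] with ω hω
    simp [hξ ω, hω, hφ.zero]
lemma memL2_add_const (S : BrownianSetting Ω P d T) (t : ℝ) {X : Ω → ℝ}
    (hX : MemL2 P (S.ℱ t) X) (c : ℝ) : MemL2 P (S.ℱ t) (fun ω => X ω + c) := by
  haveI := S.prob
  exact ⟨hX.1.add (memLp_const c), hX.2.add stronglyMeasurable_const⟩

lemma fexp_const_trans (S : BrownianSetting Ω P d T) {φ : ℝ → ℝ} {ν : ℝ} (hφ : IsPhi φ ν)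
    (ℰ : FExpectation Ω P T S.ℱ) (hH1 : SatisfiesH1 S φ ℰ)
    {t : ℝ} (ht : t ∈ Icc (0 : ℝ) T) {X : Ω → ℝ} (hX : MemL2 P (S.ℱ T) X) (c : ℝ) :
    ℰ.E t (fun ω => X ω + c) =ᵐ[P] fun ω => ℰ.E t X ω + c := by
  haveI := S.prob
  have hXc : MemL2 P (S.ℱ T) (fun ω => X ω + c) := memL2_add_const S T hX c
  have h1 := hH1 (fun ω => X ω + c) X hXc hX t ht _ _
    (bsde_const S hφ (fun ω => (X ω + c) - X ω) c (fun ω => by ring))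
  have h2 := hH1 X (fun ω => X ω + c) hX hXc t ht _ _
    (bsde_const S hφ (fun ω => X ω - (X ω + c)) (-c) (fun ω => by ring))
  filter_upwards [h1, h2] with ω h1 h2
  linarith
lemma fexp_trans_on_level (S : BrownianSetting Ω P d T) {φ : ℝ → ℝ} {ν : ℝ} (hφ : IsPhi φ ν)
    (ℰ : FExpectation Ω P T S.ℱ) (hH1 : SatisfiesH1 S φ ℰ)
    {t : ℝ} (ht : t ∈ Icc (0 : ℝ) T) {X : Ω → ℝ} (hX : MemL2 P (S.ℱ T) X)
    {W : Ω → ℝ} (hWp : MemLp W 2 P) (hWm : StronglyMeasurable[S.ℱ t] W) (c : ℝ) :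
    ∀ᵐ ω ∂P, W ω = c → ℰ.E t (fun ω => X ω + W ω) ω = ℰ.E t X ω + c := by
  haveI := S.prob
  set A := W ⁻¹' {c} with hAdef
  have hA : MeasurableSet[S.ℱ t] A := hWm.measurable (measurableSet_singleton c)
  have hXW : MemL2 P (S.ℱ T) (fun ω => X ω + W ω) :=
    ⟨hX.1.add hWp, hX.2.add (hWm.mono (S.ℱ.mono ht.2))⟩
  have hXc : MemL2 P (S.ℱ T) (fun ω => X ω + c) := memL2_add_const S T hX c
  have e2 : A.indicator (fun ω => X ω + W ω) = A.indicator (fun ω => X ω + c) := by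
    apply Set.indicator_congr
    intro ω hω
    have : W ω = c := hω
    simp only []
    rw [this]
  have e1 := ℰ.zero_one t ht _ hXW A hA
  have e3 := ℰ.zero_one t ht _ hXc A hA
  have e4 := fexp_const_trans S hφ ℰ hH1 ht hX c
  filter_upwards [e1, e3, e4] with ω h1 h3 h4 hWc
  have hωA : ω ∈ A := hWc
  calc ℰ.E t (fun ω => X ω + W ω) ω
      = A.indicator (ℰ.E t (fun ω => X ω + W ω)) ω := (Set.indicator_of_mem hωA _).symm
    _ = ℰ.E t (A.indicator (fun ω => X ω + W ω)) ω := h1.symm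
    _ = ℰ.E t (A.indicator (fun ω => X ω + c)) ω := by rw [e2]
    _ = A.indicator (ℰ.E t (fun ω => X ω + c)) ω := h3
    _ = ℰ.E t (fun ω => X ω + c) ω := Set.indicator_of_mem hωA _
    _ = ℰ.E t X ω + c := h4
lemma fexp_trans_det (S : BrownianSetting Ω P d T) {φ : ℝ → ℝ} {ν : ℝ} (hφ : IsPhi φ ν)
    (ℰ : FExpectation Ω P T S.ℱ) (hH1 : SatisfiesH1 S φ ℰ)
    {t : ℝ} (ht : t ∈ Icc (0 : ℝ) T) {X : Ω → ℝ} (hX : MemL2 P (S.ℱ T) X)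
    {W : Ω → ℝ} (hWp : MemLp W 2 P) (hWm : StronglyMeasurable[S.ℱ t] W) :
    ℰ.E t (fun ω => X ω + W ω) =ᵐ[P] fun ω => ℰ.E t X ω + W ω := by
  haveI := S.prob
  set Wn : ℕ → Ω → ℝ := fun n ω => (⌊W ω * 2 ^ n⌋ : ℝ) / 2 ^ n with hWndef
  have h2pos : ∀ n : ℕ, (0:ℝ) < 2 ^ n := fun n => by positivity
  have hWn_le : ∀ n ω, Wn n ω ≤ W ω := by
    intro n ω
    rw [div_le_iff₀ (h2pos n)]
    exact Int.floor_le _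
  have hW_lt : ∀ n ω, W ω < Wn n ω + ((2:ℝ) ^ n)⁻¹ := by
    intro n ω
    have := Int.lt_floor_add_one (W ω * 2 ^ n)
    have h2 := h2pos n
    rw [hWndef]
    have h3 : ((2:ℝ) ^ n)⁻¹ * 2 ^ n = 1 := inv_mul_cancel₀ (ne_of_gt h2)
    rw [div_add' _ _ _ (ne_of_gt h2), lt_div_iff₀ h2]
    linarith
  have hWnm : ∀ n, StronglyMeasurable[S.ℱ t] (Wn n) := by
    intro n
    apply Measurable.stronglyMeasurable
    have h1 : Measurable[S.ℱ t] fun ω => ⌊W ω * 2 ^ n⌋ :=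
      Int.measurable_floor.comp (hWm.measurable.mul_const _)
    have h2 : Measurable[S.ℱ t] fun ω => (⌊W ω * 2 ^ n⌋ : ℝ) :=
      Measurable.comp measurable_from_top h1
    exact h2.div_const _
  have hWnp : ∀ n, MemLp (Wn n) 2 P := by
    intro n
    have hg : MemLp (fun ω => ‖W ω‖ + 1) 2 P := hWp.norm.add (memLp_const 1)
    refine MemLp.of_le hg ((hWnm n).mono (S.ℱ.le t)).aestronglyMeasurable ?_
    refine Eventually.of_forall fun ω => ?_
    have h1 := hWn_le n ω
    have h2 := hW_lt n ω
    have h3 : ((2:ℝ) ^ n)⁻¹ ≤ 1 := by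
      rw [inv_le_one_iff₀]
      right; exact one_le_pow₀ one_le_two
    have : |Wn n ω| ≤ |W ω| + 1 := by
      rw [abs_le]
      constructor
      · have := neg_abs_le (W ω); linarith
      · have := le_abs_self (W ω); linarith
    simpa [Real.norm_eq_abs, abs_of_nonneg (by positivity : (0:ℝ) ≤ |W ω| + 1)] using this
  have hXWn : ∀ n, MemL2 P (S.ℱ T) (fun ω => X ω + Wn n ω) := fun n =>
    ⟨hX.1.add (hWnp n), hX.2.add ((hWnm n).mono (S.ℱ.mono ht.2))⟩
  have hXW : MemL2 P (S.ℱ T) (fun ω => X ω + W ω) :=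
    ⟨hX.1.add hWp, hX.2.add (hWm.mono (S.ℱ.mono ht.2))⟩
  have hsimple : ∀ n, ∀ᵐ ω ∂P, ℰ.E t (fun ω => X ω + Wn n ω) ω = ℰ.E t X ω + Wn n ω := by
    intro n
    have := ae_all_iff.mpr fun j : ℤ =>
      fexp_trans_on_level S hφ ℰ hH1 ht hX (hWnp n) (hWnm n) ((j : ℝ) / 2 ^ n)
    filter_upwards [this] with ω h
    exact h ⌊W ω * 2 ^ n⌋ rfl
  have hmain : ∀ n : ℕ, ∀ᵐ ω ∂P,
      |ℰ.E t (fun ω => X ω + W ω) ω - (ℰ.E t X ω + W ω)| ≤ ((2:ℝ) ^ n)⁻¹ := by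
    intro n
    have hlo := ℰ.mono t ht (fun ω => X ω + W ω) (fun ω => X ω + Wn n ω) hXW (hXWn n)
      (Eventually.of_forall fun ω => by have := hWn_le n ω; linarith)
    have hup := ℰ.mono t ht (fun ω => X ω + Wn n ω + ((2:ℝ) ^ n)⁻¹) (fun ω => X ω + W ω)
      (memL2_add_const S T (hXWn n) _) hXW
      (Eventually.of_forall fun ω => by have := hW_lt n ω; linarith)
    have hc := fexp_const_trans S hφ ℰ hH1 ht (hXWn n) ((2:ℝ) ^ n)⁻¹
    filter_upwards [hlo, hup, hc, hsimple n] with ω hlo hup hc hs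
    have h1 := hWn_le n ω
    have h2 := hW_lt n ω
    rw [abs_le]
    constructor <;> [skip; skip] <;>
    · rw [hs] at hlo
      rw [hc, hs] at hup
      linarith
  have hall := ae_all_iff.mpr hmain
  filter_upwards [hall] with ω h
  by_contra hne
  have hpos : 0 < |ℰ.E t (fun ω => X ω + W ω) ω - (ℰ.E t X ω + W ω)| :=
    abs_pos.mpr (sub_ne_zero.mpr hne)
  obtain ⟨n, hn⟩ := exists_pow_lt_of_lt_one hpos (by norm_num : (1:ℝ)/2 < 1)
  have hh := h n
  have heq : ((1:ℝ)/2) ^ n = ((2:ℝ) ^ n)⁻¹ := by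
    rw [one_div, inv_pow]
  rw [heq] at hn
  linarith
lemma indicator_sm_of_stopping (S : BrownianSetting Ω P d T) {σ : Ω → ℝ}
    (hσ : IsStoppingTime S.ℱ (fun ω => (σ ω : WithTop ℝ))) {Y : Ω → ℝ}
    (hY : StronglyMeasurable[hσ.measurableSpace] Y)
    {c : ℝ} {A : Set Ω} (hA : MeasurableSet[S.ℱ c] A) (hAc : A ⊆ {ω | σ ω ≤ c}) :
    StronglyMeasurable[S.ℱ c] (A.indicator Y) := by
  apply Measurable.stronglyMeasurable
  intro s hs
  have key : A.indicator Y ⁻¹' s =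
      (A ∩ (Y ⁻¹' s ∩ {ω | σ ω ≤ c})) ∪ ((fun _ : Ω => (0:ℝ)) ⁻¹' s \ A) := by
    ext ω
    by_cases hω : ω ∈ A
    · simp [Set.indicator_of_mem hω, hω, hAc hω]
    · simp [Set.indicator_of_notMem hω, hω]
  rw [key]
  have h0 : MeasurableSet[S.ℱ c] ((fun _ : Ω => (0:ℝ)) ⁻¹' s) := by
    by_cases h : (0:ℝ) ∈ s <;> simp [Set.preimage_const, h]
  have hYc : MeasurableSet[S.ℱ c] (Y ⁻¹' s ∩ {ω | σ ω ≤ c}) := by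
    have h := ((hσ.measurableSet (Y ⁻¹' s)).mp (hY.measurable hs)).2 c
    simp only [WithTop.coe_le_coe] at h
    exact h
  exact (hA.inter hYc).union (h0.diff hA)

lemma fexp_trans_stop_val (S : BrownianSetting Ω P d T) {φ : ℝ → ℝ} {ν : ℝ} (hφ : IsPhi φ ν)
    (ℰ : FExpectation Ω P T S.ℱ) (hH1 : SatisfiesH1 S φ ℰ)
    {σ : Ω → ℝ} (hσ : IsStoppingTime S.ℱ (fun ω => (σ ω : WithTop ℝ))) (hσT : ∀ ω, σ ω ∈ Icc (0 : ℝ) T)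
    {X : Ω → ℝ} (hX : MemL2 P (S.ℱ T) X)
    {Y : Ω → ℝ} (hY : MemLp Y 2 P) (hYσ : StronglyMeasurable[hσ.measurableSpace] Y)
    {τ : Ω → ℝ} (hτσ : ∀ ω, σ ω ≤ τ ω) {c : ℝ} (hc : c ∈ Icc (0 : ℝ) T)
    (hA : MeasurableSet[S.ℱ c] {ω | τ ω = c}) :
    ∀ᵐ ω ∂P, τ ω = c → ℰ.E c (fun ω' => X ω' + Y ω') ω = ℰ.E c X ω + Y ω := by
  haveI := S.prob
  set A := {ω | τ ω = c} with hAdef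
  have hAc : A ⊆ {ω | σ ω ≤ c} := fun ω hω => le_of_le_of_eq (hτσ ω) hω
  have hW : StronglyMeasurable[S.ℱ c] (A.indicator Y) :=
    indicator_sm_of_stopping S hσ hYσ hA hAc
  have hWp : MemLp (A.indicator Y) 2 P := hY.indicator (S.ℱ.le c _ hA)
  have hYT : StronglyMeasurable[S.ℱ T] Y := by
    have h := indicator_sm_of_stopping S hσ hYσ (MeasurableSet.univ (α := Ω))
      (fun ω _ => (hσT ω).2)
    rwa [Set.indicator_univ] at h
  have hXY : MemL2 P (S.ℱ T) (fun ω => X ω + Y ω) := ⟨hX.1.add hY, hX.2.add hYT⟩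
  have hXi : MemL2 P (S.ℱ T) (A.indicator X) :=
    ⟨hX.1.indicator (S.ℱ.le c _ hA), hX.2.indicator (S.ℱ.mono hc.2 _ hA)⟩
  have e2 : A.indicator (fun ω => X ω + Y ω) =
      fun ω => A.indicator X ω + A.indicator Y ω := by
    funext ω
    by_cases hω : ω ∈ A <;> simp [hω]
  have e1 := ℰ.zero_one c hc _ hXY A hA
  have e3 := fexp_trans_det S hφ ℰ hH1 hc hXi hWp hW
  have e4 := ℰ.zero_one c hc _ hX A hA
  filter_upwards [e1, e3, e4] with ω h1 h3 h4 hτc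
  have hωA : ω ∈ A := hτc
  calc ℰ.E c (fun ω' => X ω' + Y ω') ω
      = A.indicator (ℰ.E c (fun ω' => X ω' + Y ω')) ω := (Set.indicator_of_mem hωA _).symm
    _ = ℰ.E c (A.indicator (fun ω' => X ω' + Y ω')) ω := h1.symm
    _ = ℰ.E c (fun ω' => A.indicator X ω' + A.indicator Y ω') ω := by rw [e2]
    _ = ℰ.E c (A.indicator X) ω + A.indicator Y ω := h3
    _ = ℰ.E c X ω + Y ω := by
        rw [h4, Set.indicator_of_mem hωA, Set.indicator_of_mem hωA]

/-- translation invariance at stopping times: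
`ℰ[X + Y|F_σ] = ℰ[X|F_σ] + Y` a.s. for `Y ∈ L²(F_σ)`; here `ℰ[ξ|F_σ] = V_σ` with `V` the
RCLL version of `t ↦ ℰ[ξ|F_t]`. -/
theorem fexp_translation_invariance_stopping
    {Ω : Type*} [m0 : MeasurableSpace Ω] {P : Measure Ω} {d : ℕ} {T : ℝ}
    (S : BrownianSetting Ω P d T) (φ : ℝ → ℝ) (ν : ℝ) (hφ : IsPhi φ ν)
    (ℰ : FExpectation Ω P T S.ℱ) (hH1 : SatisfiesH1 S φ ℰ)
    (σ : Ω → ℝ) (hσ : IsStoppingTime S.ℱ (fun ω => (σ ω : WithTop ℝ))) (hσT : ∀ ω, σ ω ∈ Icc (0 : ℝ) T)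
    (X : Ω → ℝ) (hX : MemL2 P (S.ℱ T) X)
    (Y : Ω → ℝ) (hY : MemLp Y 2 P) (hYσ : StronglyMeasurable[hσ.measurableSpace] Y)
    (V₁ : ℝ → Ω → ℝ) (hV₁_rcll : ∀ ω, IsRCLLOn (fun t => V₁ t ω) 0 T)
    (hV₁ : ∀ t ∈ Icc (0 : ℝ) T, V₁ t =ᵐ[P] ℰ.E t (fun ω => X ω + Y ω))
    (V₂ : ℝ → Ω → ℝ) (hV₂_rcll : ∀ ω, IsRCLLOn (fun t => V₂ t ω) 0 T)
    (hV₂ : ∀ t ∈ Icc (0 : ℝ) T, V₂ t =ᵐ[P] ℰ.E t X) :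
    ∀ᵐ ω ∂P, V₁ (σ ω) ω = V₂ (σ ω) ω + Y ω := by
  haveI := S.prob
  have h2pos : ∀ n : ℕ, (0:ℝ) < 2 ^ n := fun n => by positivity
  set τ : ℕ → Ω → ℝ := fun n ω => min ((⌈σ ω * 2 ^ n⌉ : ℝ) / 2 ^ n) T with hτdef
  have hστ : ∀ n ω, σ ω ≤ τ n ω := by
    intro n ω
    refine le_min ?_ (hσT ω).2
    rw [le_div_iff₀ (h2pos n)]
    exact Int.le_ceil _
  have hτT : ∀ n ω, τ n ω ≤ T := fun n ω => min_le_right _ _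
  have hτIcc : ∀ n ω, τ n ω ∈ Icc (0:ℝ) T :=
    fun n ω => ⟨(hσT ω).1.trans (hστ n ω), hτT n ω⟩
  have hτ_ub : ∀ n ω, τ n ω ≤ σ ω + ((2:ℝ) ^ n)⁻¹ := by
    intro n ω
    refine (min_le_left _ _).trans (le_of_lt ?_)
    rw [div_lt_iff₀ (h2pos n), add_mul, inv_mul_cancel₀ (ne_of_gt (h2pos n))]
    exact Int.ceil_lt_add_one _
  have htend : ∀ ω, Tendsto (fun n => τ n ω) atTop (𝓝 (σ ω)) := by
    intro ω
    have hup : Tendsto (fun n : ℕ => σ ω + ((2:ℝ) ^ n)⁻¹) atTop (𝓝 (σ ω)) := by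
      have h0 : Tendsto (fun n : ℕ => ((2:ℝ) ^ n)⁻¹) atTop (𝓝 0) :=
        (tendsto_pow_atTop_atTop_of_one_lt one_lt_two).inv_tendsto_atTop
      simpa using tendsto_const_nhds.add h0
    exact tendsto_of_tendsto_of_tendsto_of_le_of_le tendsto_const_nhds hup
      (fun n => hστ n ω) (fun n => hτ_ub n ω)
  -- measurability of level sets of τ n
  have hAmeas : ∀ (n : ℕ) (c : ℝ), MeasurableSet[S.ℱ c] {ω | τ n ω = c} := by
    intro n c
    set B : Set ℝ := {x | min ((⌈x * 2 ^ n⌉ : ℝ) / 2 ^ n) T = c} ∩ Iic T with hBdef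
    have hBmeas : MeasurableSet B := by
      refine MeasurableSet.inter ?_ measurableSet_Iic
      have hm : Measurable fun x : ℝ => min ((⌈x * 2 ^ n⌉ : ℝ) / 2 ^ n) T :=
        ((Measurable.comp measurable_from_top
          ((measurable_id.mul_const _).ceil)).div_const _).min measurable_const
      exact hm (measurableSet_singleton c)
    have hBsub : B ⊆ Iic c := by
      rintro x ⟨hx1, hx2⟩
      have hx : x ≤ (⌈x * 2 ^ n⌉ : ℝ) / 2 ^ n := by
        rw [le_div_iff₀ (h2pos n)]
        exact Int.le_ceil _
      have : x ≤ min ((⌈x * 2 ^ n⌉ : ℝ) / 2 ^ n) T := le_min hx hx2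
      exact this.trans_eq hx1
    have hpre : {ω | τ n ω = c} = σ ⁻¹' B := by
      ext ω
      simp only [hτdef, hBdef, Set.mem_setOf_eq, Set.mem_preimage, Set.mem_inter_iff,
        Set.mem_Iic]
      exact ⟨fun h => ⟨h, (hσT ω).2⟩, fun h => h.1⟩
    have hσm : Measurable[hσ.measurableSpace] σ := measurable_of_Iic fun i => by
      have h := hσ.measurableSet_le' i
      simp only [WithTop.coe_le_coe] at h
      exact h
    have hmemσ : MeasurableSet[hσ.measurableSpace] (σ ⁻¹' B) := hσm hBmeas
    have h1 : MeasurableSet[S.ℱ c] (σ ⁻¹' B ∩ {ω | σ ω ≤ c}) := by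
      have h := ((hσ.measurableSet (σ ⁻¹' B)).mp hmemσ).2 c
      simp only [WithTop.coe_le_coe] at h
      exact h
    have h2 : σ ⁻¹' B ∩ {ω | σ ω ≤ c} = σ ⁻¹' B := by
      refine Set.inter_eq_self_of_subset_left fun ω hω => hBsub hω
    rw [h2] at h1
    rw [hpre]
    exact h1
  have hVeq : ∀ (n : ℕ) (c : ℝ), ∀ᵐ ω ∂P, τ n ω = c → V₁ c ω = V₂ c ω + Y ω := by
    intro n c
    by_cases hc : c ∈ Icc (0:ℝ) T
    · have h := fexp_trans_stop_val S hφ ℰ hH1 hσ hσT hX hY hYσ (hστ n) hc (hAmeas n c)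
      filter_upwards [h, hV₁ c hc, hV₂ c hc] with ω h h1 h2 hτc
      rw [h1, h2]
      exact h hτc
    · exact Eventually.of_forall fun ω hτc => absurd (hτc ▸ hτIcc n ω) hc
  have hvals : ∀ n ω, (∃ j : ℤ, τ n ω = (j : ℝ) / 2 ^ n) ∨ τ n ω = T := by
    intro n ω
    rcases min_cases ((⌈σ ω * 2 ^ n⌉ : ℝ) / 2 ^ n) T with ⟨h, _⟩ | ⟨h, _⟩
    · exact Or.inl ⟨⌈σ ω * 2 ^ n⌉, h⟩
    · exact Or.inr h
  have hbig : ∀ᵐ ω ∂P, ∀ n : ℕ, V₁ (τ n ω) ω = V₂ (τ n ω) ω + Y ω := by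
    have h1 := ae_all_iff.mpr fun n : ℕ =>
      ae_all_iff.mpr fun j : ℤ => hVeq n ((j : ℝ) / 2 ^ n)
    have h2 := ae_all_iff.mpr fun n : ℕ => hVeq n T
    filter_upwards [h1, h2] with ω h1 h2 n
    rcases hvals n ω with ⟨j, hj⟩ | hT
    · rw [hj]; exact h1 n j hj
    · rw [hT]; exact h2 n hT
  filter_upwards [hbig] with ω hbig
  by_cases hσTeq : σ ω = T
  · have hτ0 : τ 0 ω = T := le_antisymm (hτT 0 ω) (hσTeq ▸ hστ 0 ω)
    have h0 := hbig 0
    rw [hτ0] at h0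
    rw [hσTeq]
    exact h0
  · have hlt : σ ω < T := lt_of_le_of_ne (hσT ω).2 hσTeq
    have hmem : σ ω ∈ Ico (0:ℝ) T := ⟨(hσT ω).1, hlt⟩
    have hc1 : ContinuousWithinAt (fun t => V₁ t ω) (Ici (σ ω)) (σ ω) :=
      (hV₁_rcll ω).1 _ hmem
    have hc2 : ContinuousWithinAt (fun t => V₂ t ω) (Ici (σ ω)) (σ ω) :=
      (hV₂_rcll ω).1 _ hmem
    have htd : Tendsto (fun n => τ n ω) atTop (𝓝[Ici (σ ω)] (σ ω)) :=
      tendsto_nhdsWithin_iff.mpr ⟨htend ω, Eventually.of_forall fun n => hστ n ω⟩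
    have l1 : Tendsto (fun n => V₁ (τ n ω) ω) atTop (𝓝 (V₁ (σ ω) ω)) := hc1.tendsto.comp htd
    have l2 : Tendsto (fun n => V₂ (τ n ω) ω) atTop (𝓝 (V₂ (σ ω) ω)) := hc2.tendsto.comp htd
    have l2' : Tendsto (fun n => V₂ (τ n ω) ω + Y ω) atTop (𝓝 (V₂ (σ ω) ω + Y ω)) :=
      l2.add tendsto_const_nhds
    have heq : (fun n => V₁ (τ n ω) ω) = fun n => V₂ (τ n ω) ω + Y ω := funext hbig
    rw [heq] at l1
    exact tendsto_nhds_unique l1 l2'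
end
end
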